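/- Let t0, y0 ∈ ℝ, a > 0, I = [t0, t0+a], let f : I × ℝ → ℝ be continuous, let α be a lower solution and β an upper solution of y' = f(t,y), y(t0) = y0 on I with α ≤ β on I, and let L > 0 satisfy |f(t,y)| ≤ L whenever t ∈ I and α(t) ≤ y ≤ β(t), and |α'(t)| ≤ L, |β'(t)| ≤ L for all t ∈ I. Let 𝒜 be the set of continuous functions γ : I → ℝ such that α ≤ γ ≤ β on I and |γ(t) − γ(s)| ≤ L|t − s| for all s, t ∈ I. Then for all t1, t2 ∈ I with t1 < t2 and every y1 ∈ [α(t1), β(t1)], there exists γ ∈ 𝒜 such that γ(t1) = y1 and γ(t2) = y1 + ∫_{t1}^{t2} f(s, γ(s)) ds. -/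

import Mathlib

open Set

/-- The key lemma: given ordered lower and upper solutions `α ≤ β` of
`y' = f(t,y)`, `y t0 = y0` on `I = [t0, t0+a]`, a bound `L` for `|f|` between
`α` and `β` and for `|α'|, |β'|`, any points `t1 < t2` in `I` and any
`y1 ∈ [α t1, β t1]`, there is a function `γ` in the class `𝒜` (continuous,
between `α` and `β`, `L`-Lipschitz on `I`) with `γ t1 = y1` and
`γ t2 = y1 + ∫_{t1}^{t2} f(s, γ s) ds`. -/
theorem bridge_lemma (t0 y0 a : ℝ) (ha : 0 < a)
    (f : ℝ → ℝ → ℝ)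
    (hf : ContinuousOn (fun p : ℝ × ℝ => f p.1 p.2)
      (Icc t0 (t0 + a) ×ˢ (univ : Set ℝ)))
    (α β α' β' : ℝ → ℝ)
    (hαd : ∀ t ∈ Icc t0 (t0 + a), HasDerivWithinAt α (α' t) (Icc t0 (t0 + a)) t)
    (hαc : ContinuousOn α' (Icc t0 (t0 + a)))
    (hα0 : α t0 ≤ y0)
    (hαf : ∀ t ∈ Icc t0 (t0 + a), α' t ≤ f t (α t))
    (hβd : ∀ t ∈ Icc t0 (t0 + a), HasDerivWithinAt β (β' t) (Icc t0 (t0 + a)) t)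
    (hβc : ContinuousOn β' (Icc t0 (t0 + a)))
    (hβ0 : y0 ≤ β t0)
    (hβf : ∀ t ∈ Icc t0 (t0 + a), f t (β t) ≤ β' t)
    (hαβ : ∀ t ∈ Icc t0 (t0 + a), α t ≤ β t)
    (L : ℝ) (hL : 0 < L)
    (hfL : ∀ t ∈ Icc t0 (t0 + a), ∀ y : ℝ, α t ≤ y → y ≤ β t → |f t y| ≤ L)
    (hαL : ∀ t ∈ Icc t0 (t0 + a), |α' t| ≤ L)
    (hβL : ∀ t ∈ Icc t0 (t0 + a), |β' t| ≤ L)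
    (t1 t2 : ℝ) (ht1 : t1 ∈ Icc t0 (t0 + a)) (ht2 : t2 ∈ Icc t0 (t0 + a))
    (h12 : t1 < t2) (y1 : ℝ) (hy1 : y1 ∈ Icc (α t1) (β t1)) :
    ∃ γ : ℝ → ℝ,
      ContinuousOn γ (Icc t0 (t0 + a)) ∧
      (∀ t ∈ Icc t0 (t0 + a), α t ≤ γ t ∧ γ t ≤ β t) ∧
      (∀ s ∈ Icc t0 (t0 + a), ∀ t ∈ Icc t0 (t0 + a), |γ t - γ s| ≤ L * |t - s|) ∧
      γ t1 = y1 ∧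
      γ t2 = y1 + ∫ s in t1..t2, f s (γ s) := by
  have hI : t0 ≤ t0 + a := by linarith
  -- the clamping map onto `I = Icc t0 (t0+a)`
  set c : ℝ → ℝ := fun t => max t0 (min t (t0 + a)) with hcdef
  have hc_cont : Continuous c := continuous_const.max (continuous_id.min continuous_const)
  have hc_mem : ∀ t, c t ∈ Icc t0 (t0 + a) :=
    fun t => ⟨le_max_left _ _, max_le hI (min_le_right _ _)⟩
  have hc_eq : ∀ t ∈ Icc t0 (t0 + a), c t = t := by
    intro t ht
    simp only [hcdef]
    rw [min_eq_left ht.2, max_eq_right ht.1]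
  have hαcont : ContinuousOn α (Icc t0 (t0 + a)) := fun t ht => (hαd t ht).continuousWithinAt
  have hβcont : ContinuousOn β (Icc t0 (t0 + a)) := fun t ht => (hβd t ht).continuousWithinAt
  -- continuous extensions of `α`, `β`, `f`
  set A : ℝ → ℝ := fun t => α (c t) with hAdef
  set B : ℝ → ℝ := fun t => β (c t) with hBdef
  have hA_cont : Continuous A := hαcont.comp_continuous hc_cont hc_mem
  have hB_cont : Continuous B := hβcont.comp_continuous hc_cont hc_mem
  have hA_eq : ∀ t ∈ Icc t0 (t0 + a), A t = α t := by
    intro t ht; simp only [hAdef]; rw [hc_eq t ht]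
  have hB_eq : ∀ t ∈ Icc t0 (t0 + a), B t = β t := by
    intro t ht; simp only [hBdef]; rw [hc_eq t ht]
  set F : ℝ → ℝ → ℝ := fun s y => f (c s) y with hFdef
  have hF_cont : Continuous (fun p : ℝ × ℝ => F p.1 p.2) := by
    have h1 : Continuous (fun p : ℝ × ℝ => (c p.1, p.2)) :=
      (hc_cont.comp continuous_fst).prodMk continuous_snd
    exact hf.comp_continuous h1 (fun p => ⟨hc_mem p.1, mem_univ _⟩)
  -- the family of candidate functions
  set γf : ℝ → ℝ → ℝ := fun m t => max (A t) (min (y1 + m * (t - t1)) (B t)) with hγdef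
  have hγ_cont : Continuous (fun p : ℝ × ℝ => γf p.1 p.2) := by
    apply Continuous.max (hA_cont.comp continuous_snd)
    apply Continuous.min _ (hB_cont.comp continuous_snd)
    exact continuous_const.add (continuous_fst.mul (continuous_snd.sub continuous_const))
  -- Lipschitz bounds for α and β
  have hαLip : ∀ s ∈ Icc t0 (t0 + a), ∀ t ∈ Icc t0 (t0 + a), |α t - α s| ≤ L * |t - s| := by
    intro s hs t ht
    have := Convex.norm_image_sub_le_of_norm_hasDerivWithin_le hαd
      (fun x hx => by simpa using hαL x hx) (convex_Icc _ _) hs ht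
    simpa [Real.norm_eq_abs] using this
  have hβLip : ∀ s ∈ Icc t0 (t0 + a), ∀ t ∈ Icc t0 (t0 + a), |β t - β s| ≤ L * |t - s| := by
    intro s hs t ht
    have := Convex.norm_image_sub_le_of_norm_hasDerivWithin_le hβd
      (fun x hx => by simpa using hβL x hx) (convex_Icc _ _) hs ht
    simpa [Real.norm_eq_abs] using this
  -- basic properties of the family
  have hγ_mem : ∀ m : ℝ, ∀ t ∈ Icc t0 (t0 + a), α t ≤ γf m t ∧ γf m t ≤ β t := by
    intro m t ht
    constructor
    · simp only [hγdef]; rw [hA_eq t ht]; exact le_max_left _ _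
    · simp only [hγdef]
      refine max_le (by rw [hA_eq t ht]; exact hαβ t ht) ?_
      rw [min_le_iff]; right; rw [hB_eq t ht]
  have hγ_lip : ∀ m : ℝ, |m| ≤ L → ∀ s ∈ Icc t0 (t0 + a), ∀ t ∈ Icc t0 (t0 + a),
      |γf m t - γf m s| ≤ L * |t - s| := by
    intro m hm s hs t ht
    have b1 : |A t - A s| ≤ L * |t - s| := by
      rw [hA_eq t ht, hA_eq s hs]; exact hαLip s hs t ht
    have b3 : |B t - B s| ≤ L * |t - s| := by
      rw [hB_eq t ht, hB_eq s hs]; exact hβLip s hs t ht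
    have b2 : |(y1 + m * (t - t1)) - (y1 + m * (s - t1))| ≤ L * |t - s| := by
      have h1 : (y1 + m * (t - t1)) - (y1 + m * (s - t1)) = m * (t - s) := by ring
      rw [h1, abs_mul]
      exact mul_le_mul_of_nonneg_right hm (abs_nonneg _)
    simp only [hγdef]
    refine le_trans (abs_max_sub_max_le_max (A t) (min (y1 + m * (t - t1)) (B t))
      (A s) (min (y1 + m * (s - t1)) (B s))) ?_
    exact max_le b1 (le_trans (abs_min_sub_min_le_max _ _ _ _) (max_le b2 b3))
  have hγt1 : ∀ m : ℝ, γf m t1 = y1 := by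
    intro m
    simp only [hγdef]
    rw [sub_self, mul_zero, add_zero, hB_eq t1 ht1, hA_eq t1 ht1,
      min_eq_left hy1.2, max_eq_right hy1.1]
  -- the integrand and the primitive
  set G : ℝ → ℝ → ℝ := fun m s => F s (γf m s) with hGdef
  have hG_cont : Continuous (fun p : ℝ × ℝ => G p.1 p.2) :=
    hF_cont.comp (continuous_snd.prodMk hγ_cont)
  have hGm_cont : ∀ m, Continuous (G m) :=
    fun m => hG_cont.comp (continuous_const.prodMk continuous_id)
  set w : ℝ → ℝ → ℝ := fun m t => y1 + ∫ s in t1..t, G m s with hwdef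
  have hw_deriv : ∀ m t, HasDerivAt (w m) (G m t) t := by
    intro m t
    exact (((hGm_cont m).integral_hasStrictDerivAt t1 t).hasDerivAt).const_add y1
  have hw_cont : ∀ m, Continuous (w m) :=
    fun m => continuous_iff_continuousAt.2 fun t => (hw_deriv m t).continuousAt
  have hw_t1 : ∀ m, w m t1 = y1 := by intro m; simp [hwdef]
  clear_value w
  have hG_eq : ∀ m : ℝ, ∀ x ∈ Icc t0 (t0 + a), G m x = f x (γf m x) := by
    intro m x hx
    simp only [hGdef, hFdef]
    rw [hc_eq x hx]
  have hG_bound : ∀ m : ℝ, |m| ≤ L → ∀ x ∈ Icc t0 (t0 + a), |G m x| ≤ L := by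
    intro m hm x hx
    rw [hG_eq m x hx]
    exact hfL x hx _ (hγ_mem m x hx).1 (hγ_mem m x hx).2
  have hsub : Icc t1 t2 ⊆ Icc t0 (t0 + a) := Icc_subset_Icc ht1.1 ht2.2
  have hw_lin : ∀ m : ℝ, |m| ≤ L → ∀ t ∈ Icc t1 t2, |w m t - y1| ≤ L * (t - t1) := by
    intro m hm t ht
    have h := Convex.norm_image_sub_le_of_norm_hasDerivWithin_le
      (f := w m) (f' := G m) (s := Icc t1 t2)
      (fun x _ => (hw_deriv m x).hasDerivWithinAt)
      (fun x hx => by simpa using hG_bound m hm x (hsub hx)) (convex_Icc _ _)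
      (left_mem_Icc.2 h12.le) ht
    rw [hw_t1 m] at h
    simpa [Real.norm_eq_abs, abs_of_nonneg (sub_nonneg.2 ht.1)] using h
  -- right-derivatives of α and β within `Ici x`
  have hderiv_Ici : ∀ (g g' : ℝ → ℝ),
      (∀ t ∈ Icc t0 (t0 + a), HasDerivWithinAt g (g' t) (Icc t0 (t0 + a)) t) →
      ∀ x ∈ Ico t1 t2, HasDerivWithinAt g (g' x) (Ici x) x := by
    intro g g' hg x hx
    have hxI : x ∈ Icc t0 (t0 + a) := hsub (Ico_subset_Icc_self hx)
    have hmem : Icc t0 (t0 + a) ∈ nhdsWithin x (Ici x) := by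
      have h1 : Ici x ∩ Iio (t0 + a) ∈ nhdsWithin x (Ici x) :=
        Filter.inter_mem self_mem_nhdsWithin
          (mem_nhdsWithin_of_mem_nhds (Iio_mem_nhds (lt_of_lt_of_le hx.2 ht2.2)))
      exact Filter.mem_of_superset h1 (fun y hy => ⟨le_trans hxI.1 hy.1, hy.2.le⟩)
    exact (hg x hxI).mono_of_mem_nhdsWithin hmem
  have hLabs : |L| ≤ L := by rw [abs_of_pos hL]
  have hnLabs : |(-L)| ≤ L := by rw [abs_neg, abs_of_pos hL]
  -- the upper comparison: w L t2 ≤ β t2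
  have upper : w L t2 ≤ β t2 := by
    have key : ∀ ε > (0:ℝ), w L t2 ≤ β t2 + ε * (t2 - t1) := by
      intro ε hε
      have hlin : ∀ x : ℝ, HasDerivWithinAt (fun t => ε * (t - t1)) ε (Ici x) x := by
        intro x
        simpa using ((hasDerivWithinAt_id x (Ici x)).sub_const t1).const_mul ε
      have := image_le_of_deriv_right_lt_deriv_boundary' (f := w L) (f' := G L)
        (a := t1) (b := t2) (B := fun t => β t + ε * (t - t1)) (B' := fun t => β' t + ε)
        ((hw_cont L).continuousOn)
        (fun x _ => (hw_deriv L x).hasDerivWithinAt)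
        (by show w L t1 ≤ β t1 + ε * (t1 - t1)
            rw [hw_t1 L, sub_self, mul_zero, add_zero]; exact hy1.2)
        ((hβcont.mono hsub).add
          ((continuous_const.mul (continuous_id.sub continuous_const)).continuousOn))
        (fun x hx => (hderiv_Ici β β' hβd x hx).add (hlin x))
        ?_ (right_mem_Icc.2 h12.le)
      · exact this
      intro x hx hcontact
      have hxI : x ∈ Icc t0 (t0 + a) := hsub (Ico_subset_Icc_self hx)
      have hcontact' : w L x = β x + ε * (x - t1) := hcontact
      have h1 : β x ≤ w L x := by
        nlinarith [hx.1, mul_nonneg hε.le (sub_nonneg.2 hx.1)]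
      have h2 : w L x - y1 ≤ L * (x - t1) :=
        (abs_le.1 (hw_lin L hLabs x (Ico_subset_Icc_self hx))).2
      have h3 : β x ≤ y1 + L * (x - t1) := by linarith
      have h4 : γf L x = β x := by
        simp only [hγdef]
        rw [hB_eq x hxI, hA_eq x hxI, min_eq_right h3, max_eq_right (hαβ x hxI)]
      show G L x < β' x + ε
      rw [hG_eq L x hxI, h4]
      linarith [hβf x hxI]
    by_contra hcon
    push_neg at hcon
    have hΔ : (0:ℝ) < t2 - t1 := by linarith
    have h := key ((w L t2 - β t2) / (2 * (t2 - t1)))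
      (div_pos (by linarith) (by linarith))
    have h2 : (w L t2 - β t2) / (2 * (t2 - t1)) * (t2 - t1) = (w L t2 - β t2) / 2 := by
      field_simp
    rw [h2] at h
    have hcon2 : β t2 < w L t2 := hcon
    linarith [h, hcon2]
  -- the lower comparison: α t2 ≤ w (-L) t2
  have lower : α t2 ≤ w (-L) t2 := by
    have key : ∀ ε > (0:ℝ), α t2 ≤ w (-L) t2 + ε * (t2 - t1) := by
      intro ε hε
      have hlin : ∀ x : ℝ, HasDerivWithinAt (fun t => ε * (t - t1)) ε (Ici x) x := by
        intro x
        simpa using ((hasDerivWithinAt_id x (Ici x)).sub_const t1).const_mul ε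
      have := image_le_of_deriv_right_lt_deriv_boundary' (f := α) (f' := α')
        (a := t1) (b := t2) (B := fun t => w (-L) t + ε * (t - t1))
        (B' := fun t => G (-L) t + ε)
        (hαcont.mono hsub)
        (hderiv_Ici α α' hαd)
        (by show α t1 ≤ w (-L) t1 + ε * (t1 - t1)
            rw [hw_t1 (-L), sub_self, mul_zero, add_zero]; exact hy1.1)
        (((hw_cont (-L)).continuousOn).add
          ((continuous_const.mul (continuous_id.sub continuous_const)).continuousOn))
        (fun x _ => ((hw_deriv (-L) x).hasDerivWithinAt).add (hlin x))
        ?_ (right_mem_Icc.2 h12.le)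
      · exact this
      intro x hx hcontact
      have hxI : x ∈ Icc t0 (t0 + a) := hsub (Ico_subset_Icc_self hx)
      have hcontact' : α x = w (-L) x + ε * (x - t1) := hcontact
      have h1 : w (-L) x ≤ α x := by
        nlinarith [mul_nonneg hε.le (sub_nonneg.2 hx.1)]
      have h2 : -(L * (x - t1)) ≤ w (-L) x - y1 :=
        (abs_le.1 (hw_lin (-L) hnLabs x (Ico_subset_Icc_self hx))).1
      have h3 : y1 + (-L) * (x - t1) ≤ α x := by linarith
      have h4 : γf (-L) x = α x := by
        simp only [hγdef]
        rw [hA_eq x hxI]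
        exact max_eq_left (le_trans (min_le_left _ _) h3)
      have h5 : α' x ≤ G (-L) x := by
        rw [hG_eq (-L) x hxI, h4]
        exact hαf x hxI
      show α' x < G (-L) x + ε
      linarith
    by_contra hcon
    push_neg at hcon
    have hΔ : (0:ℝ) < t2 - t1 := by linarith
    have h := key ((α t2 - w (-L) t2) / (2 * (t2 - t1)))
      (div_pos (by linarith) (by linarith))
    have h2 : (α t2 - w (-L) t2) / (2 * (t2 - t1)) * (t2 - t1) = (α t2 - w (-L) t2) / 2 := by
      field_simp
    rw [h2] at h
    have hcon2 : w (-L) t2 < α t2 := hcon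
    linarith [h, hcon2]
  -- the intermediate value argument
  set Φ : ℝ → ℝ := fun m => γf m t2 - w m t2 with hΦdef
  have hΦ_cont : Continuous Φ := by
    apply Continuous.sub
    · exact hγ_cont.comp (continuous_id.prodMk continuous_const)
    · simp only [hwdef]
      exact continuous_const.add
        (intervalIntegral.continuous_parametric_intervalIntegral_of_continuous'
          (f := G) (μ := MeasureTheory.volume) hG_cont t1 t2)
  have hΦL : 0 ≤ Φ L := by
    have hline : w L t2 ≤ y1 + L * (t2 - t1) := by
      have := (abs_le.1 (hw_lin L hLabs t2 (right_mem_Icc.2 h12.le))).2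
      linarith
    have h1 : w L t2 ≤ min (y1 + L * (t2 - t1)) (B t2) := by
      refine le_min hline ?_
      rw [hB_eq t2 ht2]
      exact upper
    have h2 : w L t2 ≤ γf L t2 := by
      simp only [hγdef]
      exact h1.trans (le_max_right _ _)
    simp only [hΦdef]
    linarith
  have hΦnL : Φ (-L) ≤ 0 := by
    have hline : y1 + (-L) * (t2 - t1) ≤ w (-L) t2 := by
      have := (abs_le.1 (hw_lin (-L) hnLabs t2 (right_mem_Icc.2 h12.le))).1
      linarith
    have h1 : γf (-L) t2 ≤ w (-L) t2 := by
      simp only [hγdef]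
      refine max_le ?_ (le_trans (min_le_left _ _) hline)
      rw [hA_eq t2 ht2]
      exact lower
    simp only [hΦdef]
    linarith
  have hIVT := intermediate_value_Icc (by linarith : -L ≤ L) hΦ_cont.continuousOn
  obtain ⟨m, hmI, hΦm⟩ := hIVT (⟨hΦnL, hΦL⟩ : (0:ℝ) ∈ Icc (Φ (-L)) (Φ L))
  have hmabs : |m| ≤ L := abs_le.2 ⟨hmI.1, hmI.2⟩
  refine ⟨γf m, (hγ_cont.comp (continuous_const.prodMk continuous_id)).continuousOn,
    fun t ht => hγ_mem m t ht, fun s hs t ht => hγ_lip m hmabs s hs t ht, hγt1 m, ?_⟩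
  have h1 : γf m t2 = w m t2 := by
    have : Φ m = 0 := hΦm
    simp only [hΦdef] at this
    linarith
  rw [h1]
  simp only [hwdef]
  congr 1
  apply intervalIntegral.integral_congr
  intro s hs
  have hsI : s ∈ Icc t0 (t0 + a) := hsub (by rwa [uIcc_of_le h12.le] at hs)
  exact hG_eq m s hsI
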